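/- With notation as in the context, for every i ∈ ℤ/dℤ: there exists a nondegenerate G-invariant bilinear form on the representation σ_{o(i)} if and only if −o(i) = o(i), i.e., {−j : j ∈ o(i)} = o(i); and when −o(i) = o(i), every G-invariant bilinear form on σ_{o(i)} is symmetric. -/

import Mathlib

namespace GeometricNonvanishing

set_option linter.unusedSectionVars false

/-- The underlying type of the semidirect product `G = (ℤ/dℤ) ⋊ (ℤ/aℤ)`, in
which `j : ℤ/aℤ` acts on `ℤ/dℤ` by multiplication by `u^j` for a fixed unit
`u` of `ℤ/dℤ` of multiplicative order `a` (`u` is a phantom parameter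
recording the action). -/
@[ext]
structure Gsd (d a : ℕ) (u : (ZMod d)ˣ) where
  /-- the `ℤ/dℤ`-component -/
  x : ZMod d
  /-- the `ℤ/aℤ`-component -/
  j : ZMod a

namespace Gsd

variable {d a : ℕ} {u : (ZMod d)ˣ}

/-- `u ^ j` for `j : ZMod a`; well behaved when `u ^ a = 1`. -/
def upow [NeZero a] (u : (ZMod d)ˣ) (j : ZMod a) : (ZMod d)ˣ := u ^ j.val

section
variable [NeZero a] [hord : Fact (orderOf u = a)]

lemma upow_add (j k : ZMod a) : upow u (j + k) = upow u j * upow u k := by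
  unfold upow
  rw [← pow_add]
  apply pow_eq_pow_iff_modEq.mpr
  rw [hord.out, ZMod.val_add]
  exact Nat.mod_modEq _ a

lemma upow_zero : upow u (0 : ZMod a) = 1 := by
  unfold upow
  rw [ZMod.val_zero, pow_zero]

lemma upow_neg_mul (j : ZMod a) : upow u (-j) * upow u j = 1 := by
  rw [← upow_add, neg_add_cancel, upow_zero]

instance : Mul (Gsd d a u) :=
  ⟨fun g h => ⟨g.x + (upow u g.j : ZMod d) * h.x, g.j + h.j⟩⟩
instance : One (Gsd d a u) := ⟨⟨0, 0⟩⟩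
instance : Inv (Gsd d a u) :=
  ⟨fun g => ⟨-((upow u (-g.j) : ZMod d) * g.x), -g.j⟩⟩

@[simp] lemma mul_x (g h : Gsd d a u) :
    (g * h).x = g.x + (upow u g.j : ZMod d) * h.x := rfl
@[simp] lemma mul_j (g h : Gsd d a u) : (g * h).j = g.j + h.j := rfl
@[simp] lemma one_x : (1 : Gsd d a u).x = 0 := rfl
@[simp] lemma one_j : (1 : Gsd d a u).j = 0 := rfl
@[simp] lemma inv_x (g : Gsd d a u) :
    (g⁻¹).x = -((upow u (-g.j) : ZMod d) * g.x) := rfl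
@[simp] lemma inv_j (g : Gsd d a u) : (g⁻¹).j = -g.j := rfl

/-- The semidirect product group structure on `Gsd d a u`. -/
instance instGroup : Group (Gsd d a u) where
  mul_assoc g₁ g₂ g₃ := by
    ext
    · simp only [mul_x, mul_j, upow_add, Units.val_mul]
      ring
    · simp only [mul_j]
      exact add_assoc _ _ _
  one_mul g := by
    ext
    · simp [upow_zero]
    · simp
  mul_one g := by
    ext <;> simp
  inv_mul_cancel g := by
    ext
    · simp
    · simp

variable (u) in
/-- The orbit `o(i) = {u^j · i : j}` of `i ∈ ℤ/dℤ` under multiplication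
by the unit `u`. -/
def orb (i : ZMod d) : Finset (ZMod d) :=
  Finset.image (fun j : ZMod a => (upow u j : ZMod d) * i) Finset.univ

variable (u) in
/-- The subgroup `H_i = (ℤ/dℤ) ⋊ S_i` of `Gsd d a u`, where
`S_i = {j : u^j · i = i}` is the stabilizer of `i`. -/
def Hsub (i : ZMod d) : Subgroup (Gsd d a u) where
  carrier := {g | (upow u g.j : ZMod d) * i = i}
  mul_mem' := by
    intro g h hg hh
    show (upow u (g * h).j : ZMod d) * i = i
    rw [mul_j, upow_add, Units.val_mul, mul_assoc]
    rw [show (upow u h.j : ZMod d) * i = i from hh]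
    exact hg
  one_mem' := by
    show (upow u (1 : Gsd d a u).j : ZMod d) * i = i
    rw [one_j, upow_zero, Units.val_one, one_mul]
  inv_mem' := by
    intro g hg
    show (upow u (g⁻¹).j : ZMod d) * i = i
    rw [inv_j]
    have hg' : (upow u g.j : ZMod d) * i = i := hg
    calc (upow u (-g.j) : ZMod d) * i
        = (upow u (-g.j) : ZMod d) * ((upow u g.j : ZMod d) * i) := by rw [hg']
      _ = ((upow u (-g.j) * upow u g.j : (ZMod d)ˣ) : ZMod d) * i := by
            rw [Units.val_mul, mul_assoc]
      _ = i := by rw [upow_neg_mul, Units.val_one, one_mul]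

variable (u) in
/-- The subgroup `H = {0} ⋊ (ℤ/aℤ)` of `Gsd d a u`. -/
def Hax : Subgroup (Gsd d a u) where
  carrier := {g | g.x = 0}
  mul_mem' := by
    intro g h hg hh
    show (g * h).x = 0
    rw [mul_x, show g.x = 0 from hg, show h.x = 0 from hh, mul_zero, add_zero]
  one_mem' := rfl
  inv_mem' := by
    intro g hg
    show (g⁻¹).x = 0
    rw [inv_x, show g.x = 0 from hg, mul_zero, neg_zero]

end

/-- The character `χ̃_i (x, s) = ζ^{i·x}` of the subgroup `H_i`, extended as a
function to all of `Gsd d a u` (here `ζ` is a fixed primitive `d`-th root of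
unity in `ℂ`). -/
noncomputable def chi (ζ : ℂ) (i : ZMod d) (g : Gsd d a u) : ℂ :=
  ζ ^ (i * g.x).val

section
variable [NeZero a] [Fact (orderOf u = a)]

/-- The space of the representation of `Gsd d a u` induced from the character
`χ` of the subgroup `H'`: the space of functions `φ : G → ℂ` with
`φ (g * h) = χ h * φ g` for all `h ∈ H'`. -/
noncomputable def ind (H' : Subgroup (Gsd d a u)) (χ : Gsd d a u → ℂ) :
    Submodule ℂ (Gsd d a u → ℂ) where
  carrier := {φ | ∀ g h, h ∈ H' → φ (g * h) = χ h * φ g}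
  add_mem' := by
    intro φ ψ hφ hψ g h hh
    simp only [Pi.add_apply, hφ g h hh, hψ g h hh]
    ring
  zero_mem' := by
    intro g h hh
    simp
  smul_mem' := by
    intro c φ hφ g h hh
    simp only [Pi.smul_apply, hφ g h hh, smul_eq_mul]
    ring

lemma mem_ind {H' : Subgroup (Gsd d a u)} {χ : Gsd d a u → ℂ}
    {φ : Gsd d a u → ℂ} :
    φ ∈ ind H' χ ↔ ∀ g h, h ∈ H' → φ (g * h) = χ h * φ g := Iff.rfl

/-- The action of `Gsd d a u` on `ind H' χ` by left translation:
`(g · φ) g' = φ (g⁻¹ g')`. -/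
noncomputable def rho (H' : Subgroup (Gsd d a u)) (χ : Gsd d a u → ℂ) :
    Representation ℂ (Gsd d a u) (ind H' χ) where
  toFun g :=
    { toFun := fun φ => ⟨fun g' => (φ : Gsd d a u → ℂ) (g⁻¹ * g'), by
        intro g'' h hh
        show (φ : Gsd d a u → ℂ) (g⁻¹ * (g'' * h))
            = χ h * (φ : Gsd d a u → ℂ) (g⁻¹ * g'')
        rw [← mul_assoc]
        exact φ.2 (g⁻¹ * g'') h hh⟩
      map_add' := by intro φ ψ; ext g'; rfl
      map_smul' := by intro cc φ; ext g'; rfl }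
  map_one' := by
    apply LinearMap.ext
    intro φ
    apply Subtype.ext
    funext g'
    simp
  map_mul' := by
    intro g₁ g₂
    apply LinearMap.ext
    intro φ
    apply Subtype.ext
    funext g'
    show (φ : Gsd d a u → ℂ) ((g₁ * g₂)⁻¹ * g')
        = (φ : Gsd d a u → ℂ) (g₂⁻¹ * (g₁⁻¹ * g'))
    rw [mul_inv_rev, mul_assoc]

end


section Aux

variable {d a : ℕ} [NeZero d] [NeZero a] {u : (ZMod d)ˣ} [Fact (orderOf u = a)]
variable {ζ : ℂ} {i : ZMod d}

/-- `ζ^x` for `x : ZMod d`. -/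
noncomputable def zm (ζ : ℂ) (x : ZMod d) : ℂ := ζ ^ x.val

lemma zm_zero : zm ζ (0 : ZMod d) = 1 := by
  unfold zm
  rw [ZMod.val_zero, pow_zero]

lemma zm_add (hζ : IsPrimitiveRoot ζ d) (x y : ZMod d) :
    zm ζ (x + y) = zm ζ x * zm ζ y := by
  unfold zm
  have h : ζ ^ (x.val + y.val) = ζ ^ ((x.val + y.val) % d) := by
    conv_lhs => rw [← Nat.mod_add_div (x.val + y.val) d]
    rw [pow_add, pow_mul, hζ.pow_eq_one, one_pow, mul_one]
  rw [ZMod.val_add, ← h, pow_add]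

lemma zm_eq_one_iff (hζ : IsPrimitiveRoot ζ d) (x : ZMod d) :
    zm ζ x = 1 ↔ x = 0 := by
  unfold zm
  rw [hζ.pow_eq_one_iff_dvd]
  constructor
  · intro h
    exact (ZMod.val_eq_zero x).mp (Nat.eq_zero_of_dvd_of_lt h (ZMod.val_lt x))
  · rintro rfl
    rw [ZMod.val_zero]
    exact dvd_zero d

lemma upow_neg_mul' (t : ZMod a) : upow u t * upow u (-t) = 1 := by
  rw [mul_comm]; exact upow_neg_mul t

lemma upow_mul_eq_iff (t : ZMod a) (x y : ZMod d) :
    ((upow u t : (ZMod d)ˣ) : ZMod d) * x = y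
      ↔ x = ((upow u (-t) : (ZMod d)ˣ) : ZMod d) * y := by
  constructor
  · rintro rfl
    rw [← mul_assoc, ← Units.val_mul, upow_neg_mul, Units.val_one, one_mul]
  · rintro rfl
    rw [← mul_assoc, ← Units.val_mul, upow_neg_mul', Units.val_one, one_mul]

variable (u i) in
/-- `k(j) = u^{-j} · i`, the orbit element indexed by `j`. -/
def kk (j : ZMod a) : ZMod d := ((upow u (-j) : (ZMod d)ˣ) : ZMod d) * i

lemma kk_zero : kk u i (0 : ZMod a) = i := by
  unfold kk
  rw [neg_zero, upow_zero, Units.val_one, one_mul]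

lemma kk_add (j t : ZMod a) :
    kk u i (j + t) = ((upow u (-t) : (ZMod d)ˣ) : ZMod d) * kk u i j := by
  unfold kk
  rw [neg_add, add_comm, upow_add, Units.val_mul]
  ring

lemma stab_neg {t : ZMod a} (h : ((upow u t : (ZMod d)ˣ) : ZMod d) * i = i) :
    ((upow u (-t) : (ZMod d)ˣ) : ZMod d) * i = i := by
  calc ((upow u (-t) : (ZMod d)ˣ) : ZMod d) * i
      = ((upow u (-t) : (ZMod d)ˣ) : ZMod d)
        * (((upow u t : (ZMod d)ˣ) : ZMod d) * i) := by rw [h]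
    _ = ((upow u (-t) * upow u t : (ZMod d)ˣ) : ZMod d) * i := by
        rw [Units.val_mul, mul_assoc]
    _ = i := by rw [upow_neg_mul, Units.val_one, one_mul]

lemma kk_mul_upow (t : ZMod a) :
    kk u i t * ((upow u t : (ZMod d)ˣ) : ZMod d) = i := by
  unfold kk
  calc ((upow u (-t) : (ZMod d)ˣ) : ZMod d) * i * ((upow u t : (ZMod d)ˣ) : ZMod d)
      = ((upow u (-t) * upow u t : (ZMod d)ˣ) : ZMod d) * i := by
        rw [Units.val_mul]; ring
    _ = i := by rw [upow_neg_mul, Units.val_one, one_mul]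

variable (u i) in
/-- The basis function `e_j` of the induced representation. -/
noncomputable def EE (ζ : ℂ) (j : ZMod a) : Gsd d a u → ℂ :=
  fun g => if kk u i g.j = kk u i j then zm ζ (kk u i j * g.x) else 0

lemma EE_mem (hζ : IsPrimitiveRoot ζ d) (j : ZMod a) :
    EE u i ζ j ∈ ind (Hsub (a := a) u i) (chi ζ i) := by
  intro g h hh
  have hh' : ((upow u h.j : (ZMod d)ˣ) : ZMod d) * i = i := hh
  have hj : kk u i (g * h).j = kk u i g.j := by
    rw [mul_j, kk_add]
    unfold kk
    rw [mul_left_comm, stab_neg hh']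
  show (if kk u i (g * h).j = kk u i j then zm ζ (kk u i j * (g * h).x) else 0)
      = chi ζ i h * (if kk u i g.j = kk u i j then zm ζ (kk u i j * g.x) else 0)
  rw [hj]
  by_cases hc : kk u i g.j = kk u i j
  · rw [if_pos hc, if_pos hc]
    have key : kk u i j * ((upow u g.j : (ZMod d)ˣ) : ZMod d) = i := by
      rw [← hc]; exact kk_mul_upow g.j
    have harg : kk u i j * (g * h).x = kk u i j * g.x + i * h.x := by
      rw [mul_x, mul_add, ← mul_assoc, key]
    rw [harg, zm_add hζ]
    show zm ζ (kk u i j * g.x) * zm ζ (i * h.x) = zm ζ (i * h.x) * zm ζ (kk u i j * g.x)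
    ring
  · rw [if_neg hc, if_neg hc, mul_zero]

variable (u i) in
/-- The basis vector `e_j` of the induced representation. -/
noncomputable def Ev (hζ : IsPrimitiveRoot ζ d) (j : ZMod a) :
    ind (Hsub (a := a) u i) (chi ζ i) :=
  ⟨EE u i ζ j, EE_mem hζ j⟩

lemma Ev_congr (hζ : IsPrimitiveRoot ζ d) {j j' : ZMod a}
    (h : kk u i j = kk u i j') : Ev u i hζ j = Ev u i hζ j' := by
  apply Subtype.ext
  funext g
  show EE u i ζ j g = EE u i ζ j' g
  unfold EE
  rw [h]

lemma ind_apply (hζ : IsPrimitiveRoot ζ d) {φ : Gsd d a u → ℂ}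
    (hφ : φ ∈ ind (Hsub (a := a) u i) (chi ζ i)) (x : ZMod d) (j : ZMod a) :
    φ ⟨x, j⟩ = zm ζ (kk u i j * x) * φ ⟨0, j⟩ := by
  have hmem : (⟨((upow u (-j) : (ZMod d)ˣ) : ZMod d) * x, 0⟩ : Gsd d a u) ∈ Hsub (a := a) u i := by
    show ((upow u (0 : ZMod a) : (ZMod d)ˣ) : ZMod d) * i = i
    rw [upow_zero, Units.val_one, one_mul]
  have hprod : (⟨0, j⟩ : Gsd d a u) * ⟨((upow u (-j) : (ZMod d)ˣ) : ZMod d) * x, 0⟩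
      = ⟨x, j⟩ := by
    ext
    · show 0 + ((upow u j : (ZMod d)ˣ) : ZMod d)
        * (((upow u (-j) : (ZMod d)ˣ) : ZMod d) * x) = x
      rw [zero_add, ← mul_assoc, ← Units.val_mul, upow_neg_mul', Units.val_one, one_mul]
    · show j + 0 = j
      exact add_zero j
  have h := hφ ⟨0, j⟩ ⟨((upow u (-j) : (ZMod d)ˣ) : ZMod d) * x, 0⟩ hmem
  rw [hprod] at h
  rw [h]
  have harg : i * (((upow u (-j) : (ZMod d)ˣ) : ZMod d) * x) = kk u i j * x := by
    unfold kk; ring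
  show zm ζ (i * (((upow u (-j) : (ZMod d)ˣ) : ZMod d) * x)) * φ ⟨0, j⟩ = _
  rw [harg]

lemma ind_apply_congr (hζ : IsPrimitiveRoot ζ d) {φ : Gsd d a u → ℂ}
    (hφ : φ ∈ ind (Hsub (a := a) u i) (chi ζ i)) {j j' : ZMod a}
    (h : kk u i j = kk u i j') : φ ⟨0, j⟩ = φ ⟨0, j'⟩ := by
  have hu : ((upow u j : (ZMod d)ˣ) : ZMod d) * kk u i j
      = ((upow u j : (ZMod d)ˣ) : ZMod d) * kk u i j' := by rw [h]
  have h1 : ((upow u j : (ZMod d)ˣ) : ZMod d) * kk u i j = i := by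
    unfold kk
    rw [← mul_assoc, ← Units.val_mul, upow_neg_mul', Units.val_one, one_mul]
  have h2 : ((upow u j : (ZMod d)ˣ) : ZMod d) * kk u i j'
      = ((upow u (j - j') : (ZMod d)ˣ) : ZMod d) * i := by
    unfold kk
    rw [← mul_assoc, ← Units.val_mul, ← upow_add, sub_eq_add_neg]
  have hmem : (⟨0, j - j'⟩ : Gsd d a u) ∈ Hsub (a := a) u i := by
    show ((upow u (j - j') : (ZMod d)ˣ) : ZMod d) * i = i
    rw [← h2, ← hu, h1]
  have hprod : (⟨0, j'⟩ : Gsd d a u) * ⟨0, j - j'⟩ = ⟨0, j⟩ := by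
    ext
    · show 0 + ((upow u j' : (ZMod d)ˣ) : ZMod d) * 0 = 0
      rw [mul_zero, add_zero]
    · show j' + (j - j') = j
      ring
  have h := hφ ⟨0, j'⟩ ⟨0, j - j'⟩ hmem
  rw [hprod] at h
  rw [h]
  show zm ζ (i * (0 : ZMod d)) * φ ⟨0, j'⟩ = φ ⟨0, j'⟩
  rw [mul_zero, zm_zero, one_mul]

lemma rho_Ev (hζ : IsPrimitiveRoot ζ d) (x₀ : ZMod d) (j₀ j : ZMod a) :
    rho (Hsub (a := a) u i) (chi ζ i) ⟨x₀, j₀⟩ (Ev u i hζ j)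
      = zm ζ (-(kk u i (j + j₀) * x₀)) • Ev u i hζ (j + j₀) := by
  apply Subtype.ext
  funext g
  show EE u i ζ j ((⟨x₀, j₀⟩ : Gsd d a u)⁻¹ * g)
      = zm ζ (-(kk u i (j + j₀) * x₀)) * EE u i ζ (j + j₀) g
  have hx : ((⟨x₀, j₀⟩ : Gsd d a u)⁻¹ * g).x
      = ((upow u (-j₀) : (ZMod d)ˣ) : ZMod d) * (g.x - x₀) := by
    rw [mul_x, inv_x, inv_j]
    ring
  have hxj : ((⟨x₀, j₀⟩ : Gsd d a u)⁻¹ * g).j = g.j + -j₀ := by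
    rw [mul_j, inv_j]
    ring
  unfold EE
  rw [hx, hxj]
  have hc : (kk u i (g.j + -j₀) = kk u i j) ↔ (kk u i g.j = kk u i (j + j₀)) := by
    rw [kk_add, neg_neg, upow_mul_eq_iff, ← kk_add]
  by_cases h : kk u i g.j = kk u i (j + j₀)
  · rw [if_pos (hc.mpr h), if_pos h]
    have hk : kk u i (j + j₀) = ((upow u (-j₀) : (ZMod d)ˣ) : ZMod d) * kk u i j :=
      kk_add j j₀
    have harg : kk u i j * (((upow u (-j₀) : (ZMod d)ˣ) : ZMod d) * (g.x - x₀))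
        = -(kk u i (j + j₀) * x₀) + kk u i (j + j₀) * g.x := by
      rw [hk]; ring
    rw [harg, zm_add hζ]
  · rw [if_neg (fun hcc => h (hc.mp hcc)), if_neg h, mul_zero]

lemma sA_card_pos (j : ZMod a) :
    0 < (Finset.univ.filter fun t : ZMod a => kk u i t = kk u i j).card :=
  Finset.card_pos.mpr ⟨j, by simp⟩

lemma ind_span (hζ : IsPrimitiveRoot ζ d) (φ : ind (Hsub (a := a) u i) (chi ζ i)) :
    φ = ∑ j : ZMod a,
      ((((Finset.univ.filter fun t : ZMod a => kk u i t = kk u i j).card : ℂ))⁻¹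
        * (φ : Gsd d a u → ℂ) ⟨0, j⟩) • Ev u i hζ j := by
  apply Subtype.ext
  funext g
  obtain ⟨x, j'⟩ := g
  rw [AddSubmonoidClass.coe_finset_sum, Finset.sum_apply]
  simp only [SetLike.val_smul, Pi.smul_apply, smul_eq_mul]
  rw [ind_apply hζ φ.2 x j']
  have hterm : ∀ j : ZMod a,
      (((Finset.univ.filter fun t : ZMod a => kk u i t = kk u i j).card : ℂ))⁻¹
        * (φ : Gsd d a u → ℂ) ⟨0, j⟩ * (Ev u i hζ j : Gsd d a u → ℂ) ⟨x, j'⟩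
      = if kk u i j = kk u i j' then
          (((Finset.univ.filter fun t : ZMod a => kk u i t = kk u i j').card : ℂ))⁻¹
            * (φ : Gsd d a u → ℂ) ⟨0, j'⟩ * zm ζ (kk u i j' * x) else 0 := by
    intro j
    show _ * EE u i ζ j ⟨x, j'⟩ = _
    unfold EE
    by_cases h : kk u i j = kk u i j'
    · rw [if_pos h.symm, if_pos h]
      have hfil : (Finset.univ.filter fun t : ZMod a => kk u i t = kk u i j)
          = (Finset.univ.filter fun t : ZMod a => kk u i t = kk u i j') := by
        apply Finset.filter_congr
        intro t _
        rw [h]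
      rw [hfil, ind_apply_congr hζ φ.2 h, h]
    · rw [if_neg (fun hc => h hc.symm), if_neg h, mul_zero]
  rw [Finset.sum_congr rfl (fun j _ => hterm j), ← Finset.sum_filter,
    Finset.sum_const, nsmul_eq_mul]
  have hs : ((Finset.univ.filter fun t : ZMod a => kk u i t = kk u i j').card : ℂ) ≠ 0 := by
    exact_mod_cast (sA_card_pos (u := u) (i := i) j').ne'
  rw [← mul_assoc, ← mul_assoc, mul_inv_cancel₀ hs, one_mul]
  ring

lemma bilin_orth (hζ : IsPrimitiveRoot ζ d)
    {B : LinearMap.BilinForm ℂ (ind (Hsub (a := a) u i) (chi ζ i))}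
    (hB : ∀ (g : Gsd d a u) (v w : ind (Hsub (a := a) u i) (chi ζ i)),
      B (rho (Hsub (a := a) u i) (chi ζ i) g v) (rho (Hsub (a := a) u i) (chi ζ i) g w) = B v w)
    {j j' : ZMod a} (h : kk u i j + kk u i j' ≠ 0) :
    B (Ev u i hζ j) (Ev u i hζ j') = 0 := by
  have h1 := hB ⟨1, 0⟩ (Ev u i hζ j) (Ev u i hζ j')
  rw [rho_Ev hζ 1 0 j, rho_Ev hζ 1 0 j'] at h1
  simp only [add_zero, mul_one, map_smul, LinearMap.smul_apply, smul_eq_mul] at h1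
  have hz : zm ζ (-kk u i j) * zm ζ (-kk u i j') = zm ζ (-(kk u i j + kk u i j')) := by
    rw [← zm_add hζ, neg_add]
  have hne : zm ζ (-(kk u i j + kk u i j')) ≠ 1 := fun hcc =>
    h (neg_eq_zero.mp ((zm_eq_one_iff hζ _).mp hcc))
  have h2 : (zm ζ (-(kk u i j + kk u i j')) - 1) * B (Ev u i hζ j) (Ev u i hζ j') = 0 := by
    rw [← hz]
    linear_combination h1
  rcases mul_eq_zero.mp h2 with h3 | h3
  · exact absurd (sub_eq_zero.mp h3) hne
  · exact h3

lemma bilin_symm_E (hζ : IsPrimitiveRoot ζ d)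
    {B : LinearMap.BilinForm ℂ (ind (Hsub (a := a) u i) (chi ζ i))}
    (hB : ∀ (g : Gsd d a u) (v w : ind (Hsub (a := a) u i) (chi ζ i)),
      B (rho (Hsub (a := a) u i) (chi ζ i) g v) (rho (Hsub (a := a) u i) (chi ζ i) g w) = B v w)
    (j j' : ZMod a) :
    B (Ev u i hζ j) (Ev u i hζ j') = B (Ev u i hζ j') (Ev u i hζ j) := by
  by_cases h : kk u i j + kk u i j' = 0
  · have hneg : kk u i j' = -kk u i j := by linear_combination h
    have hneg' : kk u i j = -kk u i j' := by linear_combination h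
    have hrel : kk u i j' = ((upow u (j - j') : (ZMod d)ˣ) : ZMod d) * kk u i j := by
      conv_lhs => rw [show j' = j + (j' - j) by ring]
      rw [kk_add, neg_sub]
    have hkey : kk u i (j' + (j' - j)) = kk u i j := by
      rw [kk_add, neg_sub, hneg, mul_neg, ← hrel, ← hneg']
    have h1 := hB ⟨0, j' - j⟩ (Ev u i hζ j) (Ev u i hζ j')
    rw [rho_Ev hζ 0 (j' - j) j, rho_Ev hζ 0 (j' - j) j'] at h1
    simp only [mul_zero, neg_zero, zm_zero, one_smul] at h1
    rw [show j + (j' - j) = j' by ring, Ev_congr hζ hkey] at h1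
    exact h1.symm
  · rw [bilin_orth hζ hB h, bilin_orth hζ hB (by rwa [add_comm])]

lemma bilin_symm (hζ : IsPrimitiveRoot ζ d)
    {B : LinearMap.BilinForm ℂ (ind (Hsub (a := a) u i) (chi ζ i))}
    (hB : ∀ (g : Gsd d a u) (v w : ind (Hsub (a := a) u i) (chi ζ i)),
      B (rho (Hsub (a := a) u i) (chi ζ i) g v) (rho (Hsub (a := a) u i) (chi ζ i) g w) = B v w)
    (v w : ind (Hsub (a := a) u i) (chi ζ i)) : B v w = B w v := by
  have hv := ind_span hζ v
  have hw := ind_span hζ w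
  rw [hv, hw]
  simp only [map_sum, map_smul, LinearMap.sum_apply, LinearMap.smul_apply, smul_eq_mul,
    Finset.mul_sum]
  rw [Finset.sum_comm]
  refine Finset.sum_congr rfl fun j' _ => Finset.sum_congr rfl fun j _ => ?_
  rw [bilin_symm_E hζ hB j j']
  ring

variable (u i) in
/-- The invariant bilinear form pairing `e_j` with `e_{j+m}`. -/
noncomputable def Bform (ζ : ℂ) (m : ZMod a) :
    LinearMap.BilinForm ℂ (ind (Hsub (a := a) u i) (chi ζ i)) :=
  LinearMap.mk₂ ℂ (fun φ ψ => ∑ j : ZMod a,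
      (φ : Gsd d a u → ℂ) ⟨0, j⟩ * (ψ : Gsd d a u → ℂ) ⟨0, j + m⟩)
    (by
      intro φ φ' ψ
      simp only [Submodule.coe_add, Pi.add_apply, add_mul, Finset.sum_add_distrib])
    (by
      intro c φ ψ
      simp only [SetLike.val_smul, Pi.smul_apply, smul_eq_mul, Finset.mul_sum, mul_assoc])
    (by
      intro φ ψ ψ'
      simp only [Submodule.coe_add, Pi.add_apply, mul_add, Finset.sum_add_distrib])
    (by
      intro c φ ψ
      simp only [SetLike.val_smul, Pi.smul_apply, smul_eq_mul, Finset.mul_sum]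
      exact Finset.sum_congr rfl fun j _ => by ring)

lemma Bform_apply (ζ : ℂ) (m : ZMod a) (φ ψ : ind (Hsub (a := a) u i) (chi ζ i)) :
    Bform u i ζ m φ ψ = ∑ j : ZMod a,
      (φ : Gsd d a u → ℂ) ⟨0, j⟩ * (ψ : Gsd d a u → ℂ) ⟨0, j + m⟩ := rfl

lemma kk_add_m {m : ZMod a} (hm : kk u i m = -i) (j : ZMod a) :
    kk u i (j + m) = -kk u i j := by
  rw [add_comm, kk_add, hm]
  unfold kk
  ring

lemma rho_apply_zero (hζ : IsPrimitiveRoot ζ d) (v : ind (Hsub (a := a) u i) (chi ζ i))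
    (x₀ : ZMod d) (j₀ j : ZMod a) :
    ((rho (Hsub (a := a) u i) (chi ζ i) ⟨x₀, j₀⟩ v) : Gsd d a u → ℂ) ⟨0, j⟩
      = zm ζ (-(kk u i j * x₀)) * (v : Gsd d a u → ℂ) ⟨0, j - j₀⟩ := by
  show (v : Gsd d a u → ℂ) ((⟨x₀, j₀⟩ : Gsd d a u)⁻¹ * ⟨0, j⟩) = _
  have hprod : (⟨x₀, j₀⟩ : Gsd d a u)⁻¹ * ⟨0, j⟩
      = ⟨((upow u (-j₀) : (ZMod d)ˣ) : ZMod d) * (-x₀), j - j₀⟩ := by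
    ext
    · show -(((upow u (-j₀) : (ZMod d)ˣ) : ZMod d) * x₀)
        + ((upow u (-j₀) : (ZMod d)ˣ) : ZMod d) * 0 = _
      ring
    · show -j₀ + j = j - j₀
      ring
  rw [hprod, ind_apply hζ v.2]
  have harg : kk u i (j - j₀) * (((upow u (-j₀) : (ZMod d)ˣ) : ZMod d) * (-x₀))
      = -(kk u i j * x₀) := by
    rw [show kk u i j = kk u i ((j - j₀) + j₀) by rw [sub_add_cancel], kk_add]
    ring
  rw [harg]

lemma Bform_inv (hζ : IsPrimitiveRoot ζ d) {m : ZMod a} (hm : kk u i m = -i) :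
    ∀ (g : Gsd d a u) (v w : ind (Hsub (a := a) u i) (chi ζ i)),
      Bform u i ζ m (rho (Hsub (a := a) u i) (chi ζ i) g v) (rho (Hsub (a := a) u i) (chi ζ i) g w)
        = Bform u i ζ m v w := by
  intro g v w
  obtain ⟨x₀, j₀⟩ := g
  rw [Bform_apply, Bform_apply]
  calc ∑ j : ZMod a,
        ((rho (Hsub (a := a) u i) (chi ζ i) ⟨x₀, j₀⟩ v) : Gsd d a u → ℂ) ⟨0, j⟩
          * ((rho (Hsub (a := a) u i) (chi ζ i) ⟨x₀, j₀⟩ w) : Gsd d a u → ℂ) ⟨0, j + m⟩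
      = ∑ j : ZMod a, (v : Gsd d a u → ℂ) ⟨0, j - j₀⟩
          * (w : Gsd d a u → ℂ) ⟨0, (j - j₀) + m⟩ := by
        refine Finset.sum_congr rfl fun j _ => ?_
        rw [rho_apply_zero hζ, rho_apply_zero hζ,
          show j + m - j₀ = (j - j₀) + m by ring]
        have hone : zm ζ (-(kk u i j * x₀)) * zm ζ (-(kk u i (j + m) * x₀)) = 1 := by
          rw [← zm_add hζ, show -(kk u i j * x₀) + -(kk u i (j + m) * x₀) = 0 by
            rw [kk_add_m hm j]; ring, zm_zero]
        rw [mul_mul_mul_comm, hone, one_mul]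
    _ = ∑ j : ZMod a, (v : Gsd d a u → ℂ) ⟨0, j⟩ * (w : Gsd d a u → ℂ) ⟨0, j + m⟩ := by
        exact Fintype.sum_equiv (Equiv.subRight j₀)
          (fun j => (v : Gsd d a u → ℂ) ⟨0, j - j₀⟩ * (w : Gsd d a u → ℂ) ⟨0, (j - j₀) + m⟩)
          (fun j => (v : Gsd d a u → ℂ) ⟨0, j⟩ * (w : Gsd d a u → ℂ) ⟨0, j + m⟩)
          (fun j => rfl)

lemma Bform_nondeg (hζ : IsPrimitiveRoot ζ d) {m : ZMod a} (hm : kk u i m = -i) :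
    (Bform u i ζ m).Nondegenerate := by
  suffices hL : LinearMap.SeparatingLeft (Bform u i ζ m) by
    exact ⟨hL, fun ψ hψ => hL ψ fun y => by rw [bilin_symm hζ (Bform_inv hζ hm)]; exact hψ y⟩
  intro φ hφ
  have hval : ∀ j₁ : ZMod a, (φ : Gsd d a u → ℂ) ⟨0, j₁⟩ = 0 := by
    intro j₁
    have h := hφ (Ev u i hζ (j₁ + m))
    rw [Bform_apply] at h
    have hterm : ∀ j : ZMod a,
        (φ : Gsd d a u → ℂ) ⟨0, j⟩ * (Ev u i hζ (j₁ + m) : Gsd d a u → ℂ) ⟨0, j + m⟩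
        = if kk u i j = kk u i j₁ then (φ : Gsd d a u → ℂ) ⟨0, j₁⟩ else 0 := by
      intro j
      show (φ : Gsd d a u → ℂ) ⟨0, j⟩ * EE u i ζ (j₁ + m) ⟨0, j + m⟩ = _
      unfold EE
      have hcond : (kk u i ((⟨(0 : ZMod d), j + m⟩ : Gsd d a u)).j = kk u i (j₁ + m))
          ↔ kk u i j = kk u i j₁ := by
        show kk u i (j + m) = kk u i (j₁ + m) ↔ _
        rw [kk_add_m hm j, kk_add_m hm j₁, neg_inj]
      by_cases hc : kk u i j = kk u i j₁
      · rw [if_pos (hcond.mpr hc)]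
        show (φ : Gsd d a u → ℂ) ⟨0, j⟩ * zm ζ (kk u i (j₁ + m) * 0) = _
        rw [mul_zero, zm_zero, mul_one, if_pos hc]
        exact ind_apply_congr hζ φ.2 hc
      · rw [if_neg (fun hcc => hc (hcond.mp hcc)), mul_zero, if_neg hc]
    rw [Finset.sum_congr rfl (fun j _ => hterm j), ← Finset.sum_filter,
      Finset.sum_const, nsmul_eq_mul] at h
    have hs : ((Finset.univ.filter fun t : ZMod a => kk u i t = kk u i j₁).card : ℂ) ≠ 0 := by
      exact_mod_cast (sA_card_pos (u := u) (i := i) j₁).ne'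
    rcases mul_eq_zero.mp h with h3 | h3
    · exact absurd h3 hs
    · exact h3
  apply Subtype.ext
  funext g
  obtain ⟨x, j⟩ := g
  show (φ : Gsd d a u → ℂ) ⟨x, j⟩ = 0
  rw [ind_apply hζ φ.2, hval j, mul_zero]

lemma Ev_ne_zero (hζ : IsPrimitiveRoot ζ d) : Ev u i hζ (0 : ZMod a) ≠ 0 := by
  intro h
  have h1 := congrFun (congrArg Subtype.val h) (1 : Gsd d a u)
  have h2 : EE u i ζ (0 : ZMod a) (1 : Gsd d a u) = 1 := by
    unfold EE
    rw [one_j, one_x, if_pos rfl, mul_zero, zm_zero]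
  rw [show (Subtype.val (Ev u i hζ (0 : ZMod a))) (1 : Gsd d a u)
      = EE u i ζ (0 : ZMod a) (1 : Gsd d a u) from rfl, h2] at h1
  exact one_ne_zero ((h1.trans (by rfl)) : (1 : ℂ) = 0)

lemma exists_kk_neg (hζ : IsPrimitiveRoot ζ d)
    {B : LinearMap.BilinForm ℂ (ind (Hsub (a := a) u i) (chi ζ i))}
    (hnd : B.Nondegenerate)
    (hB : ∀ (g : Gsd d a u) (v w : ind (Hsub (a := a) u i) (chi ζ i)),
      B (rho (Hsub (a := a) u i) (chi ζ i) g v) (rho (Hsub (a := a) u i) (chi ζ i) g w) = B v w) :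
    ∃ j : ZMod a, kk u i j = -i := by
  by_contra hex
  push_neg at hex
  have hzero : ∀ w : ind (Hsub (a := a) u i) (chi ζ i), B (Ev u i hζ 0) w = 0 := by
    intro w
    rw [ind_span hζ w, map_sum]
    apply Finset.sum_eq_zero
    intro j _
    rw [map_smul, smul_eq_mul, bilin_orth hζ hB ?_, mul_zero]
    rw [kk_zero]
    intro hc
    exact hex j (by linear_combination hc)
  exact Ev_ne_zero hζ (hnd.1 _ hzero)

lemma neg_orb_eq {j₀ : ZMod a} (hj₀ : kk u i j₀ = -i) :
    (orb (a := a) u i).image (fun x => -x) = orb (a := a) u i := by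
  apply Finset.eq_of_subset_of_card_le
  · intro y hy
    rw [Finset.mem_image] at hy
    obtain ⟨z, hz, rfl⟩ := hy
    rw [orb, Finset.mem_image] at hz ⊢
    obtain ⟨t, _, rfl⟩ := hz
    refine ⟨t + (-j₀), Finset.mem_univ _, ?_⟩
    have hj₀' : ((upow u (-j₀) : (ZMod d)ˣ) : ZMod d) * i = -i := hj₀
    rw [upow_add, Units.val_mul, mul_assoc, hj₀', mul_neg]
  · rw [Finset.card_image_of_injective _ neg_injective]

lemma exists_kk_neg_of_orb
    (h : (orb (a := a) u i).image (fun x => -x) = orb (a := a) u i) :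
    ∃ m : ZMod a, kk u i m = -i := by
  have hi : i ∈ orb (a := a) u i := by
    rw [orb, Finset.mem_image]
    exact ⟨0, Finset.mem_univ _, by rw [upow_zero, Units.val_one, one_mul]⟩
  have hni : -i ∈ orb (a := a) u i := by
    rw [← h]
    exact Finset.mem_image_of_mem _ hi
  rw [orb, Finset.mem_image] at hni
  obtain ⟨t, _, ht⟩ := hni
  refine ⟨-t, ?_⟩
  unfold kk
  rw [neg_neg]
  exact ht

end Aux

end Gsd


open Gsd in
/-- **Lemma 3.6 of "Geometric non-vanishing" (Ulmer), finite-group content.**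
Let `d` be a positive integer, `u` a unit of `ℤ/dℤ` of multiplicative order
`a`, `G = (ℤ/dℤ) ⋊ (ℤ/aℤ)` the corresponding semidirect product, `ζ ∈ ℂ` a
primitive `d`-th root of unity, and `i ∈ ℤ/dℤ`.  Then the induced
representation `σ_{o(i)} = Ind_{H_i}^G χ̃_i` admits a nondegenerate
`G`-invariant bilinear form if and only if `-o(i) = o(i)`, and when
`-o(i) = o(i)` every `G`-invariant bilinear form on `σ_{o(i)}` is
symmetric. -/
theorem induced_rep_selfdual_iff_neg_orbit_eq
    {d a : ℕ} [NeZero d] [NeZero a] (u : (ZMod d)ˣ) [Fact (orderOf u = a)]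
    (ζ : ℂ) (hζ : IsPrimitiveRoot ζ d) (i : ZMod d) :
    ((∃ B : LinearMap.BilinForm ℂ (ind (Hsub (a := a) u i) (chi ζ i)),
        B.Nondegenerate ∧
        ∀ (g : Gsd d a u) (v w : ind (Hsub (a := a) u i) (chi ζ i)),
          B (rho (Hsub (a := a) u i) (chi ζ i) g v)
            (rho (Hsub (a := a) u i) (chi ζ i) g w) = B v w) ↔
      (orb (a := a) u i).image (fun x => -x) = orb (a := a) u i) ∧
    ((orb (a := a) u i).image (fun x => -x) = orb (a := a) u i →
      ∀ B : LinearMap.BilinForm ℂ (ind (Hsub (a := a) u i) (chi ζ i)),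
        (∀ (g : Gsd d a u) (v w : ind (Hsub (a := a) u i) (chi ζ i)),
          B (rho (Hsub (a := a) u i) (chi ζ i) g v)
            (rho (Hsub (a := a) u i) (chi ζ i) g w) = B v w) →
        ∀ v w, B v w = B w v) := by
  constructor
  · constructor
    · rintro ⟨B, hnd, hB⟩
      obtain ⟨j₀, hj₀⟩ := exists_kk_neg hζ hnd hB
      exact neg_orb_eq hj₀
    · intro h
      obtain ⟨m, hm⟩ := exists_kk_neg_of_orb h
      exact ⟨Bform u i ζ m, Bform_nondeg hζ hm, Bform_inv hζ hm⟩
  · intro _ B hB v w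
    exact bilin_symm hζ hB v w

end GeometricNonvanishing
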